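/- If φ ∈ R satisfies cos φ = 2/√5, then φ is incommensurable with π; i.e., φ/π is irrational. -/

import Mathlib

/-- Integer sequence `a n = (√5)^n * cos (n φ)` when `cos φ = 2/√5`. -/
def aux14 : ℕ → ℤ
  | 0 => 1
  | 1 => 2
  | (n + 2) => 4 * aux14 (n + 1) - 5 * aux14 n

lemma aux14_not_dvd (n : ℕ) : ¬ (5 : ℤ) ∣ aux14 n := by
  induction n using Nat.twoStepInduction with
  | zero => decide
  | one => decide
  | more n ih1 ih2 =>
    intro h
    apply ih2
    have : (5 : ℤ) ∣ 4 * aux14 (n + 1) := by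
      have : aux14 (n + 2) = 4 * aux14 (n + 1) - 5 * aux14 n := rfl
      omega
    omega

lemma aux14_eq (φ : ℝ) (hφ : Real.cos φ = 2 / Real.sqrt 5) (n : ℕ) :
    (aux14 n : ℝ) = (Real.sqrt 5) ^ n * Real.cos (n * φ) := by
  have h5 : Real.sqrt 5 > 0 := Real.sqrt_pos.mpr (by norm_num)
  have hsq : Real.sqrt 5 * Real.sqrt 5 = 5 := Real.mul_self_sqrt (by norm_num)
  induction n using Nat.twoStepInduction with
  | zero => simp [aux14]
  | one =>
    simp only [aux14, Nat.cast_one, one_mul, pow_one, hφ]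
    field_simp
    norm_num
  | more n ih1 ih2 =>
    have hrec : Real.cos ((n + 2 : ℕ) * φ) =
        2 * Real.cos φ * Real.cos ((n + 1 : ℕ) * φ) - Real.cos ((n : ℕ) * φ) := by
      have h1 : ((n + 2 : ℕ) : ℝ) * φ = ((n + 1 : ℕ) : ℝ) * φ + φ := by
        push_cast; ring
      have h2 : ((n : ℕ) : ℝ) * φ = ((n + 1 : ℕ) : ℝ) * φ - φ := by
        push_cast; ring
      rw [h1, h2, Real.cos_add, Real.cos_sub]
      ring
    have hthis : aux14 (n + 2) = 4 * aux14 (n + 1) - 5 * aux14 n := rfl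
    have hne : Real.sqrt 5 ≠ 0 := ne_of_gt h5
    have e1 : Real.sqrt 5 ^ (n + 2) = 5 * Real.sqrt 5 ^ n := by
      rw [pow_succ, pow_succ]; rw [mul_assoc, hsq]; ring
    have e2 : Real.sqrt 5 * Real.cos φ = 2 := by
      rw [hφ]; field_simp
    rw [hthis]
    push_cast at hrec ih1 ih2 ⊢
    rw [ih1, ih2, hrec]
    linear_combination (-(2 * Real.sqrt 5 ^ (n + 1) * Real.cos (((n : ℝ) + 1) * φ))) * e2 -
      Real.cos ((n : ℝ) * φ) * e1 + (2 * Real.sqrt 5 ^ n * Real.cos ((n : ℝ) * φ)) * hsq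

theorem stmt_14 (φ : ℝ) (hφ : Real.cos φ = 2 / Real.sqrt 5) :
    Irrational (φ / Real.pi) := by
  rw [Irrational]
  rintro ⟨r, hr⟩
  have hπ : Real.pi ≠ 0 := Real.pi_ne_zero
  have hφeq : φ = r * Real.pi := by
    field_simp at hr
    linarith [hr]
  set d := r.den with hd
  have hdpos : 0 < d := r.pos
  have hcos : Real.cos ((2 * d : ℕ) * φ) = 1 := by
    have hnum : ((2 * d : ℕ) : ℝ) * φ = (r.num : ℤ) * (2 * Real.pi) := by
      rw [hφeq]
      have : ((d : ℤ) : ℝ) * (r : ℝ) = ((r.num : ℤ) : ℝ) := by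
        rw_mod_cast [Rat.den_mul_eq_num]
      push_cast at this ⊢
      linear_combination (2 * Real.pi) * this
    rw [hnum, Real.cos_int_mul_two_pi]
  have h1 : (aux14 (2 * d) : ℝ) = ((5 : ℤ) ^ d : ℤ) := by
    rw [aux14_eq φ hφ, hcos, mul_one, pow_mul, Real.sq_sqrt (by norm_num : (5:ℝ) ≥ 0)]
    push_cast
    ring
  have h2 : aux14 (2 * d) = 5 ^ d := by exact_mod_cast h1
  exact aux14_not_dvd (2 * d) (h2 ▸ dvd_pow_self 5 hdpos.ne')
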